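/- Let K be a category with all products. Suppose for every pair of objects K, K' of K with K' not strict initial there exists a morphism K → K'. Let L be a full subcategory of K closed under products, subobjects, and quotients f : A → B for which every morphism from a λ-presentable object into B factors through f (λ-pure quotients), where K is locally λ-presentable. Then for any λ-directed diagram (K_i) in K with all K_i in L and no K_i strict initial, its colimit K lies in L; concretely, there exists a subobject A of ∏_i K_i and a λ-pure epimorphism A → K. -/

import Mathlib

open CategoryTheory CategoryTheory.Limits

universe v u

variable {C : Type u} [Category.{v} C]

/-- A small category `J` is `κ`-filtered if every diagram in `J` of size `< κ`
admits a cocone. -/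
def IsCardFiltered (κ : Cardinal.{v}) (J : Type v) [SmallCategory J] : Prop :=
  ∀ (K : Type v) [SmallCategory K],
    Cardinal.mk (Σ a b : K, a ⟶ b) < κ → ∀ F : K ⥤ J, Nonempty (Cocone F)

/-- An object `X` is `κ`-presentable if its covariant hom-functor preserves colimits of
`κ`-filtered diagrams. -/
def IsCardPresentable (κ : Cardinal.{v}) (X : C) : Prop :=
  ∀ (J : Type v) [SmallCategory J], IsCardFiltered κ J →
    Nonempty (PreservesColimitsOfShape J (coyoneda.obj (Opposite.op X)))

/-- A category is locally `κ`-presentable if it is cocomplete and has a small strong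
generator (detecting family) consisting of `κ`-presentable objects. -/
def IsLocallyPresentable (κ : Cardinal.{v}) (C : Type u) [Category.{v} C] : Prop :=
  HasColimitsOfSize.{v, v} C ∧
    ∃ S : Set C, Small.{v} S ∧ ObjectProperty.IsDetecting (fun X => X ∈ S) ∧ ∀ X ∈ S, IsCardPresentable κ X

/-- A morphism `f : A ⟶ B` is a `κ`-pure epimorphism if every `κ`-presentable object is
projective with respect to it: every morphism from a `κ`-presentable object to `B`
factors through `f`. -/
def IsPureEpi (κ : Cardinal.{v}) {A B : C} (f : A ⟶ B) : Prop :=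
  ∀ X : C, IsCardPresentable κ X → ∀ g : X ⟶ B, ∃ h : X ⟶ A, h ≫ f = g

/-- An object is strict initial if it is initial and every morphism into it is an
isomorphism. -/
def IsStrictInitial (X : C) : Prop :=
  Nonempty (IsInitial X) ∧ ∀ (Y : C) (f : Y ⟶ X), IsIso f

namespace PureSep

inductive PT (S' U : Type v) : Type v
  | leaf (g : S')
  | sup (o : Set U) (ch : o → PT S' U)
  | pair (a b : PT S' U)
  | ceq (a b : PT S' U)

variable {C : Type u} [Category.{v} C] [HasColimitsOfSize.{v,v} C]
variable {S' U : Type v} (rS : S' → C)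

noncomputable def DR (t : PT S' U) : Σ' (Dc : Type v), Dc → C :=
  match t with
  | .leaf g => ⟨PUnit, fun _ => rS g⟩
  | .sup _ ch => ⟨(x : _) → (DR (ch x)).1, fun d => ∐ fun x => (DR (ch x)).2 (d x)⟩
  | .pair a b => ⟨(DR a).1 × (DR b).1, fun d => (DR a).2 d.1 ⨿ (DR b).2 d.2⟩
  | .ceq a b => ⟨Σ' (da : (DR a).1) (db : (DR b).1),
      ((DR a).2 da ⟶ (DR b).2 db) × ((DR a).2 da ⟶ (DR b).2 db),
      fun d => coequalizer d.2.2.1 d.2.2.2⟩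
  termination_by structural t

variable (S' U) in
structure PO (W : C) : Type v where
  t : PT S' U
  d : (DR rS t).1
  k : (DR rS t).2 d ⟶ W

variable {W : C}

/-- realization -/
noncomputable abbrev PO.ob (z : PO S' U rS W) : C := (DR rS z.t).2 z.d

noncomputable instance : SmallCategory (PO S' U rS W) where
  Hom P Q := {φ : P.ob ⟶ Q.ob // φ ≫ Q.k = P.k}
  id P := ⟨𝟙 _, by simp⟩
  comp f g := ⟨f.1 ≫ g.1, by rw [Category.assoc, g.2, f.2]⟩

@[simp] lemma PO.comp_val {P Q R : PO S' U rS W} (f : P ⟶ Q) (g : Q ⟶ R) :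
    (f ≫ g).1 = f.1 ≫ g.1 := rfl
@[simp] lemma PO.id_val (P : PO S' U rS W) : (𝟙 P : P ⟶ P).1 = 𝟙 P.ob := rfl

variable (S' U) in
noncomputable def Th : PO S' U rS W ⥤ C where
  obj P := P.ob
  map f := f.1

variable (S' U) in
noncomputable def cW : Cocone (Th S' U rS (W := W)) where
  pt := W
  ι := { app := fun P => P.k
         naturality := fun P Q f => by simpa [Th] using f.2 }

variable (S' U) in
noncomputable def eW : colimit (Th S' U rS (W := W)) ⟶ W := colimit.desc _ (cW S' U rS)

variable (S' U) in
@[simp] lemma iota_eW (z : PO S' U rS W) :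
    colimit.ι (Th S' U rS (W := W)) z ≫ eW S' U rS = z.k := colimit.ι_desc _ _

end PureSep

namespace PureSep

section Filtered
set_option linter.unusedSectionVars false
variable {C : Type u} [Category.{v} C] [HasColimitsOfSize.{v,v} C]
variable {S' U : Type v} (rS : S' → C) {W : C}
variable {K : Type v} [SmallCategory K] (F : K ⥤ PO S' U rS W)
variable (oInj : K ↪ U) (mInj : (Σ a b : K, a ⟶ b) ↪ U)


lemma eqHomFam {C : Type u} [Category.{v} C] {α : Sort*} (f : α → C) {Z : C}
    (g : ∀ x, f x ⟶ Z) {x y : α} (h : x = y) (e : f x = f y) :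
    eqToHom e ≫ g y = g x := by subst h; simp

noncomputable def oinv (o : Set.range oInj) : K := o.2.choose
lemma oinv_spec (o : Set.range oInj) : oInj (oinv oInj o) = o.1 := o.2.choose_spec
noncomputable def minv (o : Set.range mInj) : Σ a b : K, a ⟶ b := o.2.choose
lemma minv_spec (o : Set.range mInj) : mInj (minv mInj o) = o.1 := o.2.choose_spec
def mkO (a : K) : Set.range oInj := ⟨oInj a, ⟨a, rfl⟩⟩
def mkM (tr : Σ a b : K, a ⟶ b) : Set.range mInj := ⟨mInj tr, ⟨tr, rfl⟩⟩
lemma oinv_mkO (a : K) : oinv oInj (mkO oInj a) = a :=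
  oInj.injective (oinv_spec oInj (mkO oInj a))
lemma minv_mkM (tr : Σ a b : K, a ⟶ b) : minv mInj (mkM mInj tr) = tr :=
  mInj.injective (minv_spec mInj (mkM mInj tr))

noncomputable def tsum : PT S' U := .sup (Set.range oInj) (fun o => (F.obj (oinv oInj o)).t)
noncomputable def dsum : (DR rS (tsum rS F oInj)).1 := fun o => (F.obj (oinv oInj o)).d
noncomputable def tmor : PT S' U := .sup (Set.range mInj) (fun o => (F.obj (minv mInj o).1).t)
noncomputable def dmor : (DR rS (tmor rS F mInj)).1 := fun o => (F.obj (minv mInj o).1).d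

noncomputable def Rsum : C := (DR rS (tsum rS F oInj)).2 (dsum rS F oInj)
noncomputable def Rmor : C := (DR rS (tmor rS F mInj)).2 (dmor rS F mInj)

noncomputable def SIota (a : K) : (F.obj a).ob ⟶ Rsum rS F oInj :=
  eqToHom (by rw [oinv_mkO]) ≫
    (Sigma.ι (fun o : Set.range oInj => (F.obj (oinv oInj o)).ob) (mkO oInj a) :
      _ ⟶ ∐ fun o : Set.range oInj => (F.obj (oinv oInj o)).ob)

noncomputable def MIota (tr : Σ a b : K, a ⟶ b) : (F.obj tr.1).ob ⟶ Rmor rS F mInj :=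
  eqToHom (by rw [minv_mkM]) ≫
    (Sigma.ι (fun o : Set.range mInj => (F.obj (minv mInj o).1).ob) (mkM mInj tr) :
      _ ⟶ ∐ fun o : Set.range mInj => (F.obj (minv mInj o).1).ob)

lemma Rsum_hom_ext {Z : C} {f g : Rsum rS F oInj ⟶ Z}
    (h : ∀ a : K, SIota rS F oInj a ≫ f = SIota rS F oInj a ≫ g) : f = g := by
  apply Sigma.hom_ext
  intro o
  have ho : mkO oInj (oinv oInj o) = o := Subtype.ext (oinv_spec oInj o)
  have h2 := h (oinv oInj o)
  simp only [SIota] at h2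
  erw [Category.assoc, Category.assoc] at h2
  have h3 := (cancel_epi (eqToHom (show (F.obj (oinv oInj o)).ob =
      (F.obj (oinv oInj (mkO oInj (oinv oInj o)))).ob by rw [oinv_mkO]))).mp h2
  rwa [ho] at h3

lemma Rmor_hom_ext {Z : C} {f g : Rmor rS F mInj ⟶ Z}
    (h : ∀ tr : Σ a b : K, a ⟶ b, MIota rS F mInj tr ≫ f = MIota rS F mInj tr ≫ g) :
    f = g := by
  apply Sigma.hom_ext
  intro o
  have ho : mkM mInj (minv mInj o) = o := Subtype.ext (minv_spec mInj o)
  have h2 := h (minv mInj o)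
  simp only [MIota] at h2
  erw [Category.assoc, Category.assoc] at h2
  have h3 := (cancel_epi (eqToHom (show (F.obj (minv mInj o).1).ob =
      (F.obj (minv mInj (mkM mInj (minv mInj o))).1).ob by rw [minv_mkM]))).mp h2
  rwa [ho] at h3

/-- map out of the sum given componentwise data indexed by K -/
noncomputable def sumDesc {Z : C} (comp : ∀ a : K, (F.obj a).ob ⟶ Z) :
    Rsum rS F oInj ⟶ Z :=
  Sigma.desc fun o => comp (oinv oInj o)

lemma SIota_sumDesc {Z : C} (comp : ∀ a : K, (F.obj a).ob ⟶ Z) (a : K) :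
    SIota rS F oInj a ≫ sumDesc rS F oInj comp = comp a := by
  rw [SIota, sumDesc]
  erw [Category.assoc, Sigma.ι_desc]
  exact eqHomFam (fun a => (F.obj a).ob) comp (oinv_mkO oInj a).symm _

noncomputable def morDesc {Z : C} (comp : ∀ tr : Σ a b : K, a ⟶ b, (F.obj tr.1).ob ⟶ Z) :
    Rmor rS F mInj ⟶ Z :=
  Sigma.desc fun o => comp (minv mInj o)

lemma MIota_morDesc {Z : C} (comp : ∀ tr : Σ a b : K, a ⟶ b, (F.obj tr.1).ob ⟶ Z)
    (tr : Σ a b : K, a ⟶ b) :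
    MIota rS F mInj tr ≫ morDesc rS F mInj comp = comp tr := by
  rw [MIota, morDesc]
  erw [Category.assoc, Sigma.ι_desc]
  exact eqHomFam (fun tr : Σ a b : K, a ⟶ b => (F.obj tr.1).ob) comp (minv_mkM mInj tr).symm _


noncomputable def smap : Rmor rS F mInj ⟶ Rsum rS F oInj :=
  morDesc rS F mInj (fun tr => (F.map tr.2.2).1 ≫ SIota rS F oInj tr.2.1)

noncomputable def tmap : Rmor rS F mInj ⟶ Rsum rS F oInj :=
  morDesc rS F mInj (fun tr => SIota rS F oInj tr.1)

noncomputable def Qt : PT S' U := .ceq (tmor rS F mInj) (tsum rS F oInj)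

noncomputable def Qd : (DR rS (Qt rS F oInj mInj)).1 :=
  ⟨dmor rS F mInj, dsum rS F oInj, (smap rS F oInj mInj, tmap rS F oInj mInj)⟩

lemma kQcond :
    smap rS F oInj mInj ≫ sumDesc rS F oInj (fun a => (F.obj a).k) =
    tmap rS F oInj mInj ≫ sumDesc rS F oInj (fun a => (F.obj a).k) := by
  apply Rmor_hom_ext
  intro tr
  rw [← Category.assoc, ← Category.assoc, smap, tmap, MIota_morDesc, MIota_morDesc,
    Category.assoc, SIota_sumDesc, SIota_sumDesc]
  exact (F.map tr.2.2).2

noncomputable def QO : PO S' U rS W where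
  t := Qt rS F oInj mInj
  d := Qd rS F oInj mInj
  k := (coequalizer.desc (sumDesc rS F oInj (fun a => (F.obj a).k)) (kQcond rS F oInj mInj) :
        coequalizer (smap rS F oInj mInj) (tmap rS F oInj mInj) ⟶ W)

noncomputable def capp (a : K) : F.obj a ⟶ QO rS F oInj mInj :=
  ⟨SIota rS F oInj a ≫ coequalizer.π (smap rS F oInj mInj) (tmap rS F oInj mInj), by
    show (SIota rS F oInj a ≫ coequalizer.π _ _) ≫ coequalizer.desc _ _ = _
    rw [Category.assoc, coequalizer.π_desc, SIota_sumDesc]⟩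

lemma capp_nat {a b : K} (f : a ⟶ b) :
    F.map f ≫ capp rS F oInj mInj b = capp rS F oInj mInj a := by
  apply Subtype.ext
  have h := coequalizer.condition (smap rS F oInj mInj) (tmap rS F oInj mInj)
  have h2 := congrArg (fun z => MIota rS F mInj ⟨a, b, f⟩ ≫ z) h
  simp only [← Category.assoc] at h2
  have e1 : MIota rS F mInj ⟨a, b, f⟩ ≫ smap rS F oInj mInj =
      (F.map f).1 ≫ SIota rS F oInj b :=
    MIota_morDesc rS F mInj (fun tr => (F.map tr.2.2).1 ≫ SIota rS F oInj tr.2.1) ⟨a, b, f⟩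
  have e2 : MIota rS F mInj ⟨a, b, f⟩ ≫ tmap rS F oInj mInj = SIota rS F oInj a :=
    MIota_morDesc rS F mInj (fun tr => SIota rS F oInj tr.1) ⟨a, b, f⟩
  rw [e1, e2] at h2
  show (F.map f).1 ≫ SIota rS F oInj b ≫
      coequalizer.π (smap rS F oInj mInj) (tmap rS F oInj mInj) =
    SIota rS F oInj a ≫ coequalizer.π (smap rS F oInj mInj) (tmap rS F oInj mInj)
  rw [← Category.assoc]
  exact h2

theorem PO_cocone (hF : Nonempty ((Σ a b : K, a ⟶ b) ↪ U) ∧ Nonempty (K ↪ U)) :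
    Nonempty (Cocone F) := by
  obtain ⟨⟨mI⟩, ⟨oI⟩⟩ := hF
  exact ⟨{ pt := QO rS F oI mI
           ι := { app := capp rS F oI mI
                  naturality := fun a b f => by
                    rw [capp_nat]; exact (Category.comp_id _).symm } }⟩

end Filtered
end PureSep


namespace PureSep

section Merge
set_option linter.unusedSectionVars false
variable {C : Type u} [Category.{v} C] [HasColimitsOfSize.{v,v} C]
variable {S' U : Type v} (rS : S' → C) {W : C}

lemma merge {G : C} (gS' : S') (eG : rS gS' = G) (g : G ⟶ W)
    (z₁ z₂ : PO S' U rS W) (y₁ : G ⟶ z₁.ob) (y₂ : G ⟶ z₂.ob)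
    (h₁ : y₁ ≫ z₁.k = g) (h₂ : y₂ ≫ z₂.k = g) :
    y₁ ≫ colimit.ι (Th S' U rS (W := W)) z₁ = y₂ ≫ colimit.ι (Th S' U rS (W := W)) z₂ := by
  have hcond : (eqToHom eG ≫ y₁ ≫ (coprod.inl : z₁.ob ⟶ z₁.ob ⨿ z₂.ob)) ≫
        coprod.desc z₁.k z₂.k
      = (eqToHom eG ≫ y₂ ≫ (coprod.inr : z₂.ob ⟶ z₁.ob ⨿ z₂.ob)) ≫
        coprod.desc z₁.k z₂.k := by
    simp only [Category.assoc, coprod.inl_desc, coprod.inr_desc, h₁, h₂]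
  let zb : PO S' U rS W := ⟨.pair z₁.t z₂.t, (z₁.d, z₂.d), coprod.desc z₁.k z₂.k⟩
  let zs : PO S' U rS W :=
    ⟨.ceq (.leaf gS') (.pair z₁.t z₂.t),
      ⟨PUnit.unit, (z₁.d, z₂.d),
        (eqToHom eG ≫ y₁ ≫ coprod.inl, eqToHom eG ≫ y₂ ≫ coprod.inr)⟩,
      coequalizer.desc (coprod.desc z₁.k z₂.k) hcond⟩
  let a₁ : z₁ ⟶ zb := ⟨coprod.inl, coprod.inl_desc _ _⟩
  let a₂ : z₂ ⟶ zb := ⟨coprod.inr, coprod.inr_desc _ _⟩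
  let c : zb ⟶ zs := ⟨coequalizer.π (eqToHom eG ≫ y₁ ≫ coprod.inl)
    (eqToHom eG ≫ y₂ ≫ coprod.inr), coequalizer.π_desc _ _⟩
  have w₁' : (coprod.inl : z₁.ob ⟶ z₁.ob ⨿ z₂.ob) ≫ colimit.ι (Th S' U rS (W := W)) zb =
      colimit.ι (Th S' U rS (W := W)) z₁ := colimit.w (Th S' U rS (W := W)) a₁
  have w₂' : (coprod.inr : z₂.ob ⟶ z₁.ob ⨿ z₂.ob) ≫ colimit.ι (Th S' U rS (W := W)) zb =
      colimit.ι (Th S' U rS (W := W)) z₂ := colimit.w (Th S' U rS (W := W)) a₂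
  have wc' : coequalizer.π (eqToHom eG ≫ y₁ ≫ coprod.inl) (eqToHom eG ≫ y₂ ≫ coprod.inr) ≫
      colimit.ι (Th S' U rS (W := W)) zs = colimit.ι (Th S' U rS (W := W)) zb :=
    colimit.w (Th S' U rS (W := W)) c
  have hcc := coequalizer.condition (eqToHom eG ≫ y₁ ≫ (coprod.inl : z₁.ob ⟶ z₁.ob ⨿ z₂.ob))
    (eqToHom eG ≫ y₂ ≫ (coprod.inr : z₂.ob ⟶ z₁.ob ⨿ z₂.ob))
  have step : y₁ ≫ (coprod.inl : z₁.ob ⟶ z₁.ob ⨿ z₂.ob) ≫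
        coequalizer.π (eqToHom eG ≫ y₁ ≫ coprod.inl) (eqToHom eG ≫ y₂ ≫ coprod.inr) ≫
        colimit.ι (Th S' U rS (W := W)) zs =
      y₂ ≫ (coprod.inr : z₂.ob ⟶ z₁.ob ⨿ z₂.ob) ≫
        coequalizer.π (eqToHom eG ≫ y₁ ≫ coprod.inl) (eqToHom eG ≫ y₂ ≫ coprod.inr) ≫
        colimit.ι (Th S' U rS (W := W)) zs := by
    have h5 := congrArg (fun q => q ≫ colimit.ι (Th S' U rS (W := W)) zs) hcc
    simp only [Category.assoc] at h5
    erw [Category.assoc, Category.assoc, Category.assoc, Category.assoc, Category.assoc,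
      Category.assoc] at h5
    exact (cancel_epi (eqToHom eG)).mp h5
  calc y₁ ≫ colimit.ι (Th S' U rS (W := W)) z₁
      = y₁ ≫ (coprod.inl : z₁.ob ⟶ z₁.ob ⨿ z₂.ob) ≫ colimit.ι (Th S' U rS (W := W)) zb := by
        rw [w₁']
    _ = y₁ ≫ (coprod.inl : z₁.ob ⟶ z₁.ob ⨿ z₂.ob) ≫
          coequalizer.π (eqToHom eG ≫ y₁ ≫ coprod.inl) (eqToHom eG ≫ y₂ ≫ coprod.inr) ≫
          colimit.ι (Th S' U rS (W := W)) zs := by rw [wc']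
    _ = y₂ ≫ (coprod.inr : z₂.ob ⟶ z₁.ob ⨿ z₂.ob) ≫
          coequalizer.π (eqToHom eG ≫ y₁ ≫ coprod.inl) (eqToHom eG ≫ y₂ ≫ coprod.inr) ≫
          colimit.ι (Th S' U rS (W := W)) zs := step
    _ = y₂ ≫ (coprod.inr : z₂.ob ⟶ z₁.ob ⨿ z₂.ob) ≫ colimit.ι (Th S' U rS (W := W)) zb := by
        rw [wc']
    _ = y₂ ≫ colimit.ι (Th S' U rS (W := W)) z₂ := by rw [w₂']

end Merge

section Sep
set_option linter.unusedSectionVars false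
variable {C : Type u} [Category.{v} C] [HasColimitsOfSize.{v,v} C]

lemma mk_cat_le {K : Type v} [SmallCategory K] :
    Cardinal.mk K ≤ Cardinal.mk (Σ a b : K, a ⟶ b) :=
  Cardinal.mk_le_of_injective (f := fun a => (⟨a, a, 𝟙 a⟩ : Σ a b : K, a ⟶ b))
    (fun x y hxy => congrArg Sigma.fst hxy)

lemma PO_cardFiltered (κ : Cardinal.{v}) {S' : Type v} (rS : S' → C) {W : C}
    (hU : ∀ T : Type v, Cardinal.mk T < κ → Nonempty (T ↪ κ.out)) :
    IsCardFiltered κ (PO S' κ.out rS W) := by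
  intro K _ hK F
  exact PO_cocone rS F ⟨hU _ hK, hU _ (lt_of_le_of_lt mk_cat_le hK)⟩

lemma separating (κ : Cardinal.{v})
    (S : Set C) (hsm : Small.{v} S) (hdet : ObjectProperty.IsDetecting (fun X => X ∈ S))
    (hpres : ∀ X ∈ S, IsCardPresentable κ X)
    {W Z : C} {u v : W ⟶ Z}
    (h : ∀ G, G ∈ S → ∀ g : G ⟶ W, g ≫ u = g ≫ v) : u = v := by
  haveI := hsm
  set S' := Shrink ↥S with hS'
  let rS : S' → C := fun g => ((equivShrink ↥S).symm g : C)
  have hmem : ∀ g : S', rS g ∈ S := fun g => ((equivShrink ↥S).symm g).2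
  set U := κ.out with hUdef
  have hU : ∀ T : Type v, Cardinal.mk T < κ → Nonempty (T ↪ U) := by
    intro T hT
    rw [← Cardinal.le_def]
    show Cardinal.mk T ≤ Cardinal.mk κ.out
    rw [Cardinal.mk_out]
    exact hT.le
  have hfil : IsCardFiltered κ (PO S' U rS W) := PO_cardFiltered κ rS hU
  -- step 2 : all stage maps equalize u and v
  have step2 : ∀ (t : PT S' U) (d : (DR rS t).1) (k : (DR rS t).2 d ⟶ W),
      k ≫ u = k ≫ v := by
    intro t
    induction t with
    | leaf g => intro d k; exact h _ (hmem g) k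
    | sup o ch ih =>
        intro d k
        apply Sigma.hom_ext
        intro x
        erw [← Category.assoc, ← Category.assoc]
        exact ih x (d x) (Sigma.ι (fun x => (DR rS (ch x)).2 (d x)) x ≫ k)
    | pair a b iha ihb =>
        intro d k
        apply coprod.hom_ext
        · erw [← Category.assoc, ← Category.assoc]
          exact iha d.1 (coprod.inl ≫ k)
        · erw [← Category.assoc, ← Category.assoc]
          exact ihb d.2 (coprod.inr ≫ k)
    | ceq a b iha ihb =>
        intro d k
        apply coequalizer.hom_ext
        erw [← Category.assoc, ← Category.assoc]
        exact ihb d.2.1 (coequalizer.π _ _ ≫ k)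
  -- detecting gives that eW is iso
  have eWiso : IsIso (eW S' U rS (W := W)) := by
    apply hdet
    intro G hG g
    let gS' : S' := equivShrink ↥S ⟨G, hG⟩
    have eG : rS gS' = G := congrArg Subtype.val (Equiv.symm_apply_apply (equivShrink ↥S) ⟨G, hG⟩)
    let ℓ : PO S' U rS W := ⟨.leaf gS', PUnit.unit, eqToHom eG ≫ g⟩
    have uniq : ∀ l₁ l₂ : G ⟶ colimit (Th S' U rS (W := W)),
        l₁ ≫ eW S' U rS = g → l₂ ≫ eW S' U rS = g → l₁ = l₂ := by
      intro l₁ l₂ hl₁ hl₂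
      haveI : PreservesColimitsOfShape (PO S' U rS W) (coyoneda.obj (Opposite.op G)) :=
        (hpres G hG _ hfil).some
      obtain ⟨z₁, y₁, hy₁⟩ := Types.jointly_surjective _
        (isColimitOfPreserves (coyoneda.obj (Opposite.op G))
          (colimit.isColimit (Th S' U rS (W := W)))) l₁
      obtain ⟨z₂, y₂, hy₂⟩ := Types.jointly_surjective _
        (isColimitOfPreserves (coyoneda.obj (Opposite.op G))
          (colimit.isColimit (Th S' U rS (W := W)))) l₂
      have hy₁' : y₁ ≫ colimit.ι (Th S' U rS (W := W)) z₁ = l₁ := hy₁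
      have hy₂' : y₂ ≫ colimit.ι (Th S' U rS (W := W)) z₂ = l₂ := hy₂
      have hk₁ : y₁ ≫ z₁.k = g := by
        rw [← iota_eW S' U rS z₁, ← Category.assoc, hy₁', hl₁]
      have hk₂ : y₂ ≫ z₂.k = g := by
        rw [← iota_eW S' U rS z₂, ← Category.assoc, hy₂', hl₂]
      rw [← hy₁', ← hy₂']
      exact merge rS gS' eG g z₁ z₂ y₁ y₂ hk₁ hk₂
    refine ⟨eqToHom eG.symm ≫ colimit.ι (Th S' U rS (W := W)) ℓ, ?_, ?_⟩
    · show (eqToHom eG.symm ≫ colimit.ι (Th S' U rS (W := W)) ℓ) ≫ eW S' U rS = g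
      erw [Category.assoc, iota_eW]
      show eqToHom eG.symm ≫ eqToHom eG ≫ g = g
      rw [eqToHom_trans_assoc, eqToHom_refl, Category.id_comp]
    · intro y hy
      exact uniq y _ hy (by
        show (eqToHom eG.symm ≫ colimit.ι (Th S' U rS (W := W)) ℓ) ≫ eW S' U rS = g
        erw [Category.assoc, iota_eW]
        show eqToHom eG.symm ≫ eqToHom eG ≫ g = g
        rw [eqToHom_trans_assoc, eqToHom_refl, Category.id_comp])
  have heq : eW S' U rS (W := W) ≫ u = eW S' U rS (W := W) ≫ v := by
    apply colimit.hom_ext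
    intro z
    simp only [← Category.assoc, iota_eW]
    exact step2 z.t z.d z.k
  haveI := eWiso
  exact (cancel_epi (eW S' U rS (W := W))).mp heq

end Sep
end PureSep

namespace PureSep
section Main
set_option linter.unusedSectionVars false
variable {C : Type u} [Category.{v} C] [HasProducts.{v} C]
variable {J : Type v} [Preorder J] (D : J ⥤ C)

noncomputable scoped instance decLE : ∀ a b : J, Decidable (a ≤ b) := fun _ _ => Classical.dec _

abbrev IndexOpt (j : J) : Type v := Option {k : J // ¬ j ≤ k}

noncomputable abbrev Gfam (j : J) : IndexOpt j → C
  | none => D.obj j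
  | some k => D.obj k.val

noncomputable abbrev Aobj (j : J) : C := ∏ᶜ Gfam D j

noncomputable def mcomp (j k : J) : Aobj D j ⟶ D.obj k :=
  if h : j ≤ k then Pi.π (Gfam D j) none ≫ D.map (homOfLE h)
  else Pi.π (Gfam D j) (some ⟨k, h⟩)

noncomputable def mj (j : J) : Aobj D j ⟶ ∏ᶜ D.obj := Pi.lift (mcomp D j)

lemma mcomp_self (j : J) : mcomp D j j = Pi.π (Gfam D j) none := by
  rw [mcomp, dif_pos (le_refl j)]
  have : homOfLE (le_refl j) = 𝟙 j := Subsingleton.elim _ _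
  rw [this, D.map_id]
  exact Category.comp_id _

lemma mj_mono (j : J) : Mono (mj D j) := by
  constructor
  intro W u v huv
  apply Pi.hom_ext
  rintro (_ | ⟨k, hk⟩)
  · have h2 := congrArg (fun q => q ≫ Pi.π D.obj j) huv
    simp only [Category.assoc, mj, Pi.lift_π, mcomp_self] at h2
    exact h2
  · have h2 := congrArg (fun q => q ≫ Pi.π D.obj k) huv
    simp only [Category.assoc, mj, Pi.lift_π] at h2
    rw [mcomp, dif_neg hk] at h2
    exact h2

noncomputable def tmapJ {j j' : J} (h : j ≤ j') : Aobj D j ⟶ Aobj D j' :=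
  Pi.lift fun o => match o with
    | none => Pi.π (Gfam D j) none ≫ D.map (homOfLE h)
    | some k => mcomp D j k.val

lemma tmapJ_none {j j' : J} (h : j ≤ j') :
    tmapJ D h ≫ Pi.π (Gfam D j') none = Pi.π (Gfam D j) none ≫ D.map (homOfLE h) :=
  Pi.lift_π _ _

lemma tmapJ_some {j j' : J} (h : j ≤ j') (k : {k : J // ¬ j' ≤ k}) :
    tmapJ D h ≫ Pi.π (Gfam D j') (some k) = mcomp D j k.val :=
  Pi.lift_π _ _

lemma tmapJ_mcomp {j j' : J} (h : j ≤ j') (k : J) :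
    tmapJ D h ≫ mcomp D j' k = mcomp D j k := by
  by_cases h' : j' ≤ k
  · rw [mcomp, dif_pos h', ← Category.assoc, tmapJ_none, Category.assoc, ← D.map_comp,
      mcomp, dif_pos (le_trans h h')]
    have he : (homOfLE (le_trans h h') : j ⟶ k) = homOfLE h ≫ homOfLE h' :=
      Subsingleton.elim _ _
    rw [he]
  · rw [mcomp, dif_neg h', tmapJ_some]

noncomputable def AF : J ⥤ C where
  obj := Aobj D
  map {j j'} f := tmapJ D (leOfHom f)
  map_id j := by
    apply Pi.hom_ext
    rintro (_ | ⟨k, hk⟩)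
    · rw [tmapJ_none]
      have : homOfLE (leOfHom (𝟙 j)) = 𝟙 j := Subsingleton.elim _ _
      rw [this, D.map_id]
      simp only [Category.id_comp]
      exact Category.comp_id _
    · rw [tmapJ_some, mcomp, dif_neg hk]
      simp only [Category.id_comp]
  map_comp {j j' j''} f g := by
    apply Pi.hom_ext
    rintro (_ | ⟨k, hk⟩)
    · rw [tmapJ_none, Category.assoc, tmapJ_none, ← Category.assoc, tmapJ_none,
        Category.assoc, ← D.map_comp]
      have he : (homOfLE (leOfHom (f ≫ g)) : j ⟶ j'') =
          homOfLE (leOfHom f) ≫ homOfLE (leOfHom g) := Subsingleton.elim _ _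
      rw [he]
    · rw [tmapJ_some, Category.assoc, tmapJ_some, tmapJ_mcomp]

lemma tmapJ_mj {j j' : J} (h : j ≤ j') : tmapJ D h ≫ mj D j' = mj D j := by
  apply Pi.hom_ext
  intro k
  rw [Category.assoc, mj, Pi.lift_π, tmapJ_mcomp, mj, Pi.lift_π]

variable [HasColimitsOfSize.{v,v} C]

noncomputable def mcoc : Cocone (AF D) where
  pt := ∏ᶜ D.obj
  ι := { app := fun j => mj D j
         naturality := fun j j' f => by
           show tmapJ D (leOfHom f) ≫ mj D j' = mj D j ≫ 𝟙 _
           rw [tmapJ_mj, Category.comp_id] }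

noncomputable def mM : colimit (AF D) ⟶ ∏ᶜ D.obj := colimit.desc _ (mcoc D)

lemma iota_mM (j : J) : colimit.ι (AF D) j ≫ mM D = mj D j := colimit.ι_desc _ _

variable [HasColimit D]

noncomputable def pcoc : Cocone (AF D) where
  pt := colimit D
  ι := { app := fun j => Pi.π (Gfam D j) none ≫ colimit.ι D j
         naturality := fun j j' f => by
           show tmapJ D (leOfHom f) ≫ Pi.π (Gfam D j') none ≫ colimit.ι D j' =
             (Pi.π (Gfam D j) none ≫ colimit.ι D j) ≫ 𝟙 _
           rw [Category.comp_id, ← Category.assoc, tmapJ_none, Category.assoc, colimit.w] }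

noncomputable def pM : colimit (AF D) ⟶ colimit D := colimit.desc _ (pcoc D)

noncomputable def sig (c : ∀ j k : J, ¬ j ≤ k → (D.obj j ⟶ D.obj k)) (j : J) :
    D.obj j ⟶ Aobj D j :=
  Pi.lift fun o => match o with
    | none => 𝟙 (D.obj j)
    | some k => c j k.val k.2

lemma sig_iota_p (c : ∀ j k : J, ¬ j ≤ k → (D.obj j ⟶ D.obj k)) (j : J) :
    sig D c j ≫ colimit.ι (AF D) j ≫ pM D = colimit.ι D j := by
  erw [pM, colimit.ι_desc]
  show sig D c j ≫ Pi.π (Gfam D j) none ≫ colimit.ι D j = _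
  rw [← Category.assoc, sig, Pi.lift_π]
  exact Category.id_comp _

end Main
end PureSep


open PureSep

/-- Let `C` be locally `κ`-presentable with all products and strongly
connected (there is a morphism into every non-strict-initial object).  If `P` defines a
full subcategory closed under products, subobjects, and `κ`-pure quotients, then for every
`κ`-directed diagram of objects of `P`, none of which is strict initial, the colimit lies
in `P`; concretely, there is a subobject `A` of the product of the diagram and a `κ`-pure
epimorphism from `A` onto the colimit. -/
theorem colimit_mem_of_closed_under_pure_quotients
    (κ : Cardinal.{v}) (hκ : κ.IsRegular)
    (hC : IsLocallyPresentable κ C) [HasProducts.{v} C]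
    (hconn : ∀ X Y : C, ¬ IsStrictInitial Y → Nonempty (X ⟶ Y))
    (P : C → Prop)
    (hprod : ∀ (ι : Type v) (A : ι → C), (∀ i, P (A i)) → P (∏ᶜ A))
    (hsub : ∀ {A B : C} (m : A ⟶ B), Mono m → P B → P A)
    (hpure : ∀ {A B : C} (f : A ⟶ B), IsPureEpi κ f → P A → P B)
    (J : Type v) [Preorder J]
    (hdir : ∀ S : Set J, Cardinal.mk S < κ → ∃ j, ∀ i ∈ S, i ≤ j)
    (D : J ⥤ C) (hD : ∀ j, P (D.obj j)) (hnsi : ∀ j, ¬ IsStrictInitial (D.obj j))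
    [HasColimit D] :
    P (colimit D) ∧
      ∃ (A : C) (m : A ⟶ ∏ᶜ D.obj) (p : A ⟶ colimit D), Mono m ∧ IsPureEpi κ p := by
  haveI hcol : HasColimitsOfSize.{v, v} C := hC.1
  obtain ⟨S, hsm, hdet, hpres⟩ := hC.2
  have hκ0 : Cardinal.aleph0 ≤ κ := hκ.aleph0_le
  -- J is κ-filtered
  have hJfil : IsCardFiltered κ J := by
    intro K _ hK F
    have hlt : Cardinal.mk (Set.range F.obj) < κ :=
      lt_of_le_of_lt (le_trans Cardinal.mk_range_le mk_cat_le) hK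
    obtain ⟨j, hj⟩ := hdir _ hlt
    exact ⟨⟨j, ⟨fun a => homOfLE (hj _ ⟨a, rfl⟩), fun a b f => Subsingleton.elim _ _⟩⟩⟩
  -- connecting morphisms
  let c : ∀ j k : J, ¬ j ≤ k → (D.obj j ⟶ D.obj k) := fun j k _ =>
    (hconn (D.obj j) (D.obj k) (hnsi k)).some
  -- purity of pM
  have hpureM : IsPureEpi κ (pM D) := by
    intro X hX g
    haveI := (hX J hJfil).some
    obtain ⟨j, y, hy⟩ := Types.jointly_surjective _
      (isColimitOfPreserves (coyoneda.obj (Opposite.op X)) (colimit.isColimit D)) g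
    have hy' : y ≫ colimit.ι D j = g := hy
    refine ⟨y ≫ sig D c j ≫ colimit.ι (AF D) j, ?_⟩
    simp only [Category.assoc, sig_iota_p]
    erw [Category.assoc, sig_iota_p]
    exact hy'
  -- mM is a monomorphism
  have hmono : Mono (mM D) := by
    constructor
    intro Wo u v huv
    apply separating κ S hsm hdet hpres
    intro G hG g
    haveI := (hpres G hG J hJfil).some
    obtain ⟨j₁, y₁, hy₁⟩ := Types.jointly_surjective _
      (isColimitOfPreserves (coyoneda.obj (Opposite.op G)) (colimit.isColimit (AF D))) (g ≫ u)
    obtain ⟨j₂, y₂, hy₂⟩ := Types.jointly_surjective _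
      (isColimitOfPreserves (coyoneda.obj (Opposite.op G)) (colimit.isColimit (AF D))) (g ≫ v)
    have hy₁' : y₁ ≫ colimit.ι (AF D) j₁ = g ≫ u := hy₁
    have hy₂' : y₂ ≫ colimit.ι (AF D) j₂ = g ≫ v := hy₂
    have hpairlt : Cardinal.mk ({j₁, j₂} : Set J) < κ :=
      lt_of_lt_of_le (Set.Finite.lt_aleph0 (Set.toFinite _)) hκ0
    obtain ⟨j, hj⟩ := hdir _ hpairlt
    have hj₁ : j₁ ≤ j := hj _ (by simp)
    have hj₂ : j₂ ≤ j := hj _ (by simp)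
    have hx₁ : (y₁ ≫ (AF D).map (homOfLE hj₁)) ≫ colimit.ι (AF D) j = g ≫ u := by
      rw [Category.assoc, colimit.w, hy₁']
    have hx₂ : (y₂ ≫ (AF D).map (homOfLE hj₂)) ≫ colimit.ι (AF D) j = g ≫ v := by
      rw [Category.assoc, colimit.w, hy₂']
    have t₁ := congrArg (fun q => q ≫ mM D) hx₁
    have t₂ := congrArg (fun q => q ≫ mM D) hx₂
    simp only [Category.assoc, iota_mM] at t₁ t₂
    rw [huv] at t₁
    have hmjx : (y₁ ≫ (AF D).map (homOfLE hj₁)) ≫ mj D j =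
        (y₂ ≫ (AF D).map (homOfLE hj₂)) ≫ mj D j := by
      simp only [Category.assoc]
      exact (Category.assoc _ _ _).trans ((t₁.trans t₂.symm).trans (Category.assoc _ _ _).symm)
    have hx12 : y₁ ≫ (AF D).map (homOfLE hj₁) = y₂ ≫ (AF D).map (homOfLE hj₂) :=
      (mj_mono D j).right_cancellation _ _ hmjx
    rw [← hx₁, ← hx₂, hx12]
  -- conclusion
  have hPprod : P (∏ᶜ D.obj) := hprod J D.obj hD
  have hPA : P (colimit (AF D)) := hsub (mM D) hmono hPprod
  have hPcol : P (colimit D) := hpure (pM D) hpureM hPA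
  exact ⟨hPcol, colimit (AF D), mM D, pM D, hmono, hpureM⟩
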